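/- Let k be a field of characteristic zero and let A, B, w ∈ k[x,y] be polynomials in two variables. Suppose the Jacobian Jac(A,B) is a unit of k[x,y] (equivalently, a nonzero constant) and Jac(A,w) = 0. Then w lies in k[A], i.e., w belongs to the k-subalgebra of k[x,y] generated by A (equivalently, w = P(A) for some univariate polynomial P with coefficients in k). -/

import Mathlib

open MvPolynomial

/-- Coefficient formula for partial derivatives of multivariate polynomials. -/
theorem coeff_pderiv' {R : Type*} [CommSemiring R] {σ : Type*} [DecidableEq σ]
    (f : MvPolynomial σ R) (i : σ) (b : σ →₀ ℕ) :
    coeff b (pderiv i f) = ((b i + 1 : ℕ) : R) * coeff (b + Finsupp.single i 1) f := by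
  induction f using MvPolynomial.induction_on' with
  | add p q hp hq => simp [map_add, coeff_add, hp, hq, mul_add]
  | monomial s a =>
    rw [pderiv_monomial]
    simp only [coeff_monomial]
    by_cases hs : s = b + Finsupp.single i 1
    · subst hs
      have h1 : (b + Finsupp.single i 1) - Finsupp.single i 1 = b := by
        simp only [add_tsub_cancel_right]
      rw [if_pos h1, if_pos rfl]
      simp [mul_comm]
    · rw [if_neg hs, mul_zero]
      by_cases h2 : s - Finsupp.single i 1 = b
      · have hsi : s i = 0 := by
          by_contra hne
          apply hs
          rw [← h2, tsub_add_cancel_of_le]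
          rwa [Finsupp.single_le_iff, Nat.one_le_iff_ne_zero]
        rw [if_pos h2, hsi]
        simp
      · rw [if_neg h2]

/-- Partial derivatives commute. -/
theorem pderiv_comm' {R : Type*} [CommSemiring R] {σ : Type*} [DecidableEq σ]
    (f : MvPolynomial σ R) (i j : σ) :
    pderiv i (pderiv j f) = pderiv j (pderiv i f) := by
  by_cases hij : i = j
  · subst hij; rfl
  · ext b
    rw [coeff_pderiv', coeff_pderiv', coeff_pderiv', coeff_pderiv']
    have h1 : ((b + Finsupp.single i 1 : σ →₀ ℕ)) j = b j := by
      simp [Finsupp.add_apply, Finsupp.single_eq_of_ne' hij]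
    have h2 : ((b + Finsupp.single j 1 : σ →₀ ℕ)) i = b i := by
      simp [Finsupp.add_apply, Finsupp.single_eq_of_ne' (fun h => hij h.symm)]
    rw [h1, h2, add_right_comm]
    ring

/-- A polynomial in two variables over a characteristic-zero field whose partial
derivatives all vanish is constant. -/
theorem eq_C_of_pderiv_eq_zero' {k : Type*} [Field k] [CharZero k]
    (f : MvPolynomial (Fin 2) k) (h : ∀ i : Fin 2, pderiv i f = 0) :
    f = C (coeff 0 f) := by
  ext m
  rw [coeff_C]
  by_cases hm : (0 : Fin 2 →₀ ℕ) = m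
  · rw [if_pos hm, ← hm]
  · rw [if_neg hm]
    obtain ⟨i, hi⟩ : ∃ i, m i ≠ 0 := by
      by_contra hc
      push_neg at hc
      exact hm (by ext a; simp [hc a] : m = 0).symm
    have hle : Finsupp.single i 1 ≤ m := by
      rwa [Finsupp.single_le_iff, Nat.one_le_iff_ne_zero]
    have := coeff_pderiv' f i (m - Finsupp.single i 1)
    rw [h i, tsub_add_cancel_of_le hle, coeff_zero] at this
    have hne : ((((m - Finsupp.single i 1 : Fin 2 →₀ ℕ)) i + 1 : ℕ) : k) ≠ 0 :=
      Nat.cast_ne_zero.mpr (Nat.succ_ne_zero _)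
    exact (mul_eq_zero.mp this.symm).resolve_left hne

/-- A nonzero partial derivative has strictly smaller total degree. -/
theorem totalDegree_pderiv_lt' {k : Type*} [Field k] [CharZero k]
    {f : MvPolynomial (Fin 2) k} {i : Fin 2} (h : pderiv i f ≠ 0) :
    totalDegree (pderiv i f) < totalDegree f := by
  have hne : (pderiv i f).support.Nonempty := support_nonempty.mpr h
  obtain ⟨b, hb, hsup⟩ : ∃ b ∈ (pderiv i f).support,
      (pderiv i f).totalDegree = b.sum fun _ e => e := by
    obtain ⟨b, hb, he⟩ := Finset.exists_mem_eq_sup _ hne (fun m : Fin 2 →₀ ℕ => m.sum fun _ e => e)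
    exact ⟨b, hb, he⟩
  have hcb : coeff (b + Finsupp.single i 1) f ≠ 0 := by
    intro hc
    rw [mem_support_iff, coeff_pderiv', hc, mul_zero] at hb
    exact hb rfl
  have hmem : b + Finsupp.single i 1 ∈ f.support := mem_support_iff.mpr hcb
  have hle := le_totalDegree hmem
  have hsum : ((b + Finsupp.single i 1).sum fun _ e => e) = (b.sum fun _ e => e) + 1 := by
    rw [Finsupp.sum_add_index' (fun _ => rfl) (fun _ _ _ => rfl), Finsupp.sum_single_index rfl]
  omega

/-- The top homogeneous component of a nonzero polynomial is nonzero. -/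
theorem leadingHomogeneous_ne_zero {k : Type*} [CommRing k] {f : MvPolynomial (Fin 2) k}
    (hf : f ≠ 0) : homogeneousComponent f.totalDegree f ≠ 0 := by
  obtain ⟨b, hb, hsup⟩ := Finset.exists_mem_eq_sup f.support (support_nonempty.mpr hf)
    (fun m : Fin 2 →₀ ℕ => m.sum fun _ e => e)
  intro hc
  have hdeg : b.degree = f.totalDegree := by
    rw [totalDegree, hsup, Finsupp.degree]
    rfl
  have := coeff_homogeneousComponent (φ := f) f.totalDegree b
  rw [hc, coeff_zero, if_pos hdeg] at this
  exact mem_support_iff.mp hb this.symm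

/-- Total degree is additive on products over a domain. -/
theorem totalDegree_mul_eq' {k : Type*} [CommRing k] [IsDomain k]
    {f g : MvPolynomial (Fin 2) k} (hf : f ≠ 0) (hg : g ≠ 0) :
    (f * g).totalDegree = f.totalDegree + g.totalDegree := by
  refine le_antisymm (totalDegree_mul f g) ?_
  set a := f.totalDegree with ha
  set b := g.totalDegree with hb
  have key : ∀ i ∈ Finset.range (a+1), ∀ j ∈ Finset.range (b+1),
      homogeneousComponent (a+b) (homogeneousComponent i f * homogeneousComponent j g)
      = if i = a ∧ j = b then homogeneousComponent a f * homogeneousComponent b g else 0 := by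
    intro i hi j hj
    have hmem : homogeneousComponent i f * homogeneousComponent j g ∈
        homogeneousSubmodule (Fin 2) k (i + j) :=
      (mem_homogeneousSubmodule _ _).mpr
        ((homogeneousComponent_isHomogeneous i f).mul (homogeneousComponent_isHomogeneous j g))
    rw [homogeneousComponent_of_mem hmem]
    have hi' := Finset.mem_range_succ_iff.mp hi
    have hj' := Finset.mem_range_succ_iff.mp hj
    by_cases hij : i = a ∧ j = b
    · rw [if_pos (by omega : a + b = i + j), if_pos hij, hij.1, hij.2]
    · rw [if_neg (by omega : ¬ a + b = i + j), if_neg hij]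
  set F := homogeneousComponent a f * homogeneousComponent b g with hF
  have inner : ∀ i, (∑ j ∈ Finset.range (b+1), if i = a ∧ j = b then F else 0)
      = if i = a then F else 0 := by
    intro i
    by_cases hia : i = a
    · simp only [hia, true_and, if_true]
      rw [Finset.sum_ite_eq' (Finset.range (b+1)) b fun _ => F,
        if_pos (Finset.self_mem_range_succ b)]
    · simp [hia]
  have hcomp : homogeneousComponent (a + b) (f * g) = F := by
    conv_lhs => rw [← sum_homogeneousComponent f, ← sum_homogeneousComponent g, ← ha, ← hb]
    rw [Finset.sum_mul_sum, map_sum]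
    calc (∑ i ∈ Finset.range (a+1), (homogeneousComponent (a+b))
            (∑ j ∈ Finset.range (b+1), homogeneousComponent i f * homogeneousComponent j g))
        = ∑ i ∈ Finset.range (a+1), ∑ j ∈ Finset.range (b+1),
            (if i = a ∧ j = b then F else 0) := by
          refine Finset.sum_congr rfl fun i hi => ?_
          rw [map_sum]
          exact Finset.sum_congr rfl (key i hi)
      _ = ∑ i ∈ Finset.range (a+1), (if i = a then F else 0) :=
          Finset.sum_congr rfl fun i _ => inner i
      _ = F := by
          rw [Finset.sum_ite_eq' (Finset.range (a+1)) a fun _ => F,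
            if_pos (Finset.self_mem_range_succ a)]
  by_contra hlt
  push_neg at hlt
  have hz := homogeneousComponent_eq_zero (φ := f * g) (n := a + b) hlt
  rw [hcomp] at hz
  exact mul_ne_zero (leadingHomogeneous_ne_zero hf) (leadingHomogeneous_ne_zero hg) hz

/-- The Jacobian of two polynomials `p, q ∈ R[x,y]`:
`Jac(p,q) = (∂p/∂x)(∂q/∂y) − (∂p/∂y)(∂q/∂x)`. -/
noncomputable def Jac {R : Type*} [CommRing R]
    (p q : MvPolynomial (Fin 2) R) : MvPolynomial (Fin 2) R :=
  pderiv 0 p * pderiv 1 q - pderiv 1 p * pderiv 0 q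

/-- If the gradients of `A` and `w` are proportional and the gradient of `A` has
relatively prime entries, the factor of proportionality is a polynomial. -/
theorem exists_grad_factor {k : Type*} [Field k] [CharZero k]
    {A w : MvPolynomial (Fin 2) k}
    (hrel : IsRelPrime (pderiv 0 A) (pderiv 1 A)) (hJ : Jac A w = 0) :
    ∃ h, pderiv 0 w = h * pderiv 0 A ∧ pderiv 1 w = h * pderiv 1 A := by
  have hxy : pderiv 0 A * pderiv 1 w = pderiv 1 A * pderiv 0 w := by
    have : pderiv 0 A * pderiv 1 w - pderiv 1 A * pderiv 0 w = 0 := hJ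
    linear_combination this
  by_cases hA0 : pderiv 0 A = 0
  · by_cases hA1 : pderiv 1 A = 0
    · exact absurd (hrel (by simp [hA0]) (by simp [hA1])) not_isUnit_zero
    · have hw0 : pderiv 0 w = 0 := by
        have h0 : pderiv 1 A * pderiv 0 w = 0 := by
          rw [← hxy, hA0, zero_mul]
        exact (mul_eq_zero.mp h0).resolve_left hA1
      have hu : IsUnit (pderiv 1 A) := hrel (by simp [hA0]) dvd_rfl
      obtain ⟨v, hv⟩ := hu.exists_right_inv
      refine ⟨pderiv 1 w * v, ?_, ?_⟩
      · rw [hw0, hA0, mul_zero]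
      · rw [mul_assoc, mul_comm v, hv, mul_one]
  · have hdvd : pderiv 0 A ∣ pderiv 0 w * pderiv 1 A :=
      ⟨pderiv 1 w, by linear_combination -hxy⟩
    obtain ⟨h, hh⟩ := hrel.dvd_of_dvd_mul_right hdvd
    refine ⟨h, by rw [hh, mul_comm], ?_⟩
    have : pderiv 0 A * pderiv 1 w = pderiv 0 A * (h * pderiv 1 A) := by
      rw [hxy, hh]; ring
    exact mul_left_cancel₀ hA0 this

/-- **CMW's theorem over a field `k` of characteristic zero.**
If `Jac(A,B)` is a unit of `k[x,y]` and `Jac(A,w) = 0`, then `w ∈ k[A]`. -/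
theorem cmw_over_charZero_field {k : Type*} [Field k] [CharZero k]
    (A B w : MvPolynomial (Fin 2) k)
    (hAB : IsUnit (Jac A B)) (hAw : Jac A w = 0) :
    w ∈ Algebra.adjoin k {A} := by
  have hrel : IsRelPrime (pderiv 0 A) (pderiv 1 A) := fun d hd0 hd1 =>
    isUnit_of_dvd_unit
      (show d ∣ Jac A B from dvd_sub (hd0.mul_right _) (hd1.mul_right _)) hAB
  suffices H : ∀ n (w : MvPolynomial (Fin 2) k), w.totalDegree = n → Jac A w = 0 →
      w ∈ Algebra.adjoin k {A} from H _ w rfl hAw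
  intro n
  induction n using Nat.strong_induction_on with
  | _ n IH =>
    intro w hdeg hJ
    by_cases hwc : ∀ i : Fin 2, pderiv i w = 0
    · rw [eq_C_of_pderiv_eq_zero' w hwc]
      exact Subalgebra.algebraMap_mem (Algebra.adjoin k {A}) (coeff 0 w)
    · obtain ⟨h, hw0, hw1⟩ := exists_grad_factor hrel hJ
      have hwi : ∀ i : Fin 2, pderiv i w = h * pderiv i A := by
        intro i; fin_cases i <;> assumption
      -- Jac A h = 0
      have e1 : pderiv 1 (h * pderiv 0 A) = pderiv 0 (h * pderiv 1 A) := by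
        rw [← hw0, ← hw1, pderiv_comm']
      rw [pderiv_mul, pderiv_mul] at e1
      have e2 : pderiv 0 (pderiv 1 A) = pderiv 1 (pderiv 0 A) := pderiv_comm' A 0 1
      have hJh : Jac A h = 0 := by
        show pderiv 0 A * pderiv 1 h - pderiv 1 A * pderiv 0 h = 0
        linear_combination e1 + h * e2
      -- degree decrease
      push_neg at hwc
      obtain ⟨i, hi⟩ := hwc
      have hne : h * pderiv i A ≠ 0 := by rw [← hwi i]; exact hi
      have hh0 : h ≠ 0 := left_ne_zero_of_mul hne
      have hA0 : pderiv i A ≠ 0 := right_ne_zero_of_mul hne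
      have hlt : h.totalDegree < n := by
        have h1 : (h * pderiv i A).totalDegree = h.totalDegree + (pderiv i A).totalDegree :=
          totalDegree_mul_eq' hh0 hA0
        have h2 : (pderiv i w).totalDegree < w.totalDegree := totalDegree_pderiv_lt' hi
        rw [hwi i, h1] at h2
        omega
      have hmem : h ∈ Algebra.adjoin k {A} := IH h.totalDegree hlt h rfl hJh
      rw [Algebra.adjoin_singleton_eq_range_aeval] at hmem ⊢
      obtain ⟨Q, hQ0⟩ := hmem
      have hQ : Polynomial.aeval A Q = h := hQ0
      set R : Polynomial k := Q.sum fun n a => Polynomial.C (a / (n+1)) * Polynomial.X^(n+1)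
        with hR
      have hdR : Polynomial.derivative R = Q := by
        rw [hR, Polynomial.sum_def, map_sum]
        calc (∑ m ∈ Q.support,
                Polynomial.derivative (Polynomial.C (Q.coeff m / (m+1)) * Polynomial.X^(m+1)))
            = ∑ m ∈ Q.support, Polynomial.C (Q.coeff m) * Polynomial.X^m := by
              refine Finset.sum_congr rfl fun m _ => ?_
              rw [Polynomial.derivative_C_mul_X_pow]
              have hm1 : ((m : k) + 1) ≠ 0 := Nat.cast_add_one_ne_zero m
              congr 2
              push_cast
              exact div_mul_cancel₀ _ hm1
          _ = Q.sum fun m a => Polynomial.C a * Polynomial.X ^ m :=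
              (Polynomial.sum_def Q (fun m a => Polynomial.C a * Polynomial.X ^ m)).symm
          _ = Q := Polynomial.sum_C_mul_X_pow_eq Q
      have hgrad : ∀ i : Fin 2, pderiv i (w - Polynomial.aeval A R) = 0 := by
        intro i
        rw [map_sub, Derivation.map_aeval, hdR, hQ, smul_eq_mul, hwi i, sub_self]
      have hconst := eq_C_of_pderiv_eq_zero' _ hgrad
      refine ⟨R + Polynomial.C (coeff 0 (w - Polynomial.aeval A R)), ?_⟩
      show Polynomial.aeval A (R + Polynomial.C (coeff 0 (w - Polynomial.aeval A R))) = w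
      rw [map_add, Polynomial.aeval_C]
      have halg : (algebraMap k (MvPolynomial (Fin 2) k)) (coeff 0 (w - Polynomial.aeval A R))
          = C (coeff 0 (w - Polynomial.aeval A R)) := rfl
      rw [halg, ← hconst]
      ring
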